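/- Let λ_ess > 0 and λ < λ_ess be real numbers, μ := λ_ess − λ > 0, and let h: [R₀,∞) → [0,∞) be measurable with ∫_{R₀}^∞ h(s)² e^s ds < ∞ (weighted square-integrability modeling h ∈ L²_f). Suppose that for every δ ∈ (0,1), every k ≥ (R₀+1)(1+δ)√μ, and every R > k/((1+δ)√μ), the Agmon-type energy inequality ∫_{R₀}^{k/((1+δ)√μ)} μ(1−δ²) φ(s)² h(s)² e^{2δ√μ s} e^s ds ≤ C(R₀) + (1/R² + 2√μ/R) ∫_R^{2R} h(s)² e^{2(k−√μ s)} e^s ds holds, where φ is the standard cutoff equal to 1 on [R₀+1, R]. Then ∫_{R₀}^∞ h(s)² e^{2δ√μ s} e^s ds < ∞ for every δ ∈ (0,1); i.e., e^{δ√μ s} h ∈ L² with weight e^s. -/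

import Mathlib

open MeasureTheory Real

/-- The standard Agmon cutoff: `s − R₀` on `[R₀, R₀+1]`, `1` on `[R₀+1, R]`,
`(2R − s)/R` on `[R, 2R]`, `0` elsewhere. -/
noncomputable def agmonCutoff (R0 R : ℝ) : ℝ → ℝ := fun s =>
  if s < R0 then 0
  else if s ≤ R0 + 1 then s - R0
  else if s ≤ R then 1
  else if s ≤ 2 * R then (2 * R - s) / R
  else 0

lemma agmonCutoff_nonneg {R0 R : ℝ} (hR : 0 < R) (s : ℝ) : 0 ≤ agmonCutoff R0 R s := by
  unfold agmonCutoff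
  split_ifs with h1 h2 h3 h4
  · exact le_refl 0
  · linarith
  · norm_num
  · exact div_nonneg (by linarith) hR.le
  · exact le_refl 0

lemma agmonCutoff_le_one {R0 R : ℝ} (hR : 0 < R) (s : ℝ) : agmonCutoff R0 R s ≤ 1 := by
  unfold agmonCutoff
  split_ifs with h1 h2 h3 h4
  · norm_num
  · linarith
  · exact le_refl 1
  · rw [div_le_one hR]; linarith
  · norm_num

lemma agmonCutoff_measurable (R0 R : ℝ) : Measurable (agmonCutoff R0 R) := by
  unfold agmonCutoff
  refine Measurable.ite (measurableSet_lt measurable_id measurable_const) measurable_const ?_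
  refine Measurable.ite (measurableSet_le measurable_id measurable_const)
    (measurable_id.sub measurable_const) ?_
  refine Measurable.ite (measurableSet_le measurable_id measurable_const) measurable_const ?_
  exact Measurable.ite (measurableSet_le measurable_id measurable_const)
    ((measurable_const.sub measurable_id).div_const R) measurable_const

lemma agmonCutoff_eq_one {R0 R s : ℝ} (h1 : R0 + 1 < s) (h2 : s ≤ R) :
    agmonCutoff R0 R s = 1 := by
  unfold agmonCutoff
  rw [if_neg (by linarith), if_neg (by linarith), if_pos h2]

/-- one-dimensional skeleton of the Agmon decay argument:
let `λ_ess > 0`, `λ < λ_ess`, `μ := λ_ess − λ`, and let `h` be weighted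
square-integrable on `[R₀,∞)` (`∫ h² eˢ ds < ∞`). If for every `δ ∈ (0,1)`,
`k ≥ (R₀+1)(1+δ)√μ` and `R > k/((1+δ)√μ)` the Agmon energy inequality
`∫_{R₀}^{k/((1+δ)√μ)} μ(1−δ²) φ² h² e^{2δ√μ s} eˢ ds
  ≤ C(R₀) + (1/R² + 2√μ/R) ∫_R^{2R} h² e^{2(k−√μ s)} eˢ ds`
holds (with `φ` the standard cutoff), then
`∫_{R₀}^∞ h² e^{2δ√μ s} eˢ ds < ∞` for every `δ ∈ (0,1)`. -/
theorem stmt19 (lamess lam R0 CR0 : ℝ) (hlamess : 0 < lamess) (hlt : lam < lamess)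
    (mu : ℝ) (hmu : mu = lamess - lam)
    (h : ℝ → ℝ) (hmeas : Measurable h)
    (hL2 : IntegrableOn (fun s => (h s) ^ 2 * exp s) (Set.Ici R0))
    (hEnergy : ∀ δ ∈ Set.Ioo (0:ℝ) 1,
      ∀ k : ℝ, (R0 + 1) * (1 + δ) * Real.sqrt mu ≤ k →
      ∀ R : ℝ, k / ((1 + δ) * Real.sqrt mu) < R →
      ∫ s in Set.Ioc R0 (k / ((1 + δ) * Real.sqrt mu)),
          mu * (1 - δ ^ 2) * (agmonCutoff R0 R s) ^ 2 * (h s) ^ 2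
            * exp (2 * δ * Real.sqrt mu * s) * exp s
        ≤ CR0 + (1 / R ^ 2 + 2 * Real.sqrt mu / R)
            * ∫ s in Set.Ioc R (2 * R),
                (h s) ^ 2 * exp (2 * (k - Real.sqrt mu * s)) * exp s) :
    ∀ δ ∈ Set.Ioo (0:ℝ) 1,
      IntegrableOn
        (fun s => (h s) ^ 2 * exp (2 * δ * Real.sqrt mu * s) * exp s)
        (Set.Ici R0) := by
  intro δ hδ
  obtain ⟨hδ0, hδ1⟩ := hδ
  have hmu0 : 0 < mu := by rw [hmu]; linarith
  have hc0 : 0 < Real.sqrt mu := Real.sqrt_pos.mpr hmu0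
  set c := Real.sqrt mu with hc
  have ha0 : 0 < (1 + δ) * c := by positivity
  set g : ℝ → ℝ := fun s => h s ^ 2 * exp (2 * δ * c * s) * exp s with hg
  have hgmeas : Measurable g := by
    apply ((hmeas.pow_const 2).mul _).mul Real.measurable_exp
    exact Real.measurable_exp.comp (measurable_const.mul measurable_id)
  have hgnn : ∀ s, 0 ≤ g s := fun s => by positivity
  set p : ℝ → ℝ := fun s => h s ^ 2 * exp s with hp
  have hpnn : ∀ s, 0 ≤ p s := fun s => by positivity
  set I := ∫ s in Set.Ici R0, p s with hI
  have hInn : 0 ≤ I := setIntegral_nonneg measurableSet_Ici (fun s _ => hpnn s)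
  -- domination: g is integrable on any Icc R0 b
  have hgint : ∀ b : ℝ, IntegrableOn g (Set.Icc R0 b) := by
    intro b
    apply Integrable.mono'
      ((hL2.mono_set Set.Icc_subset_Ici_self).const_mul (exp (2 * δ * c * b)))
      hgmeas.aestronglyMeasurable
    filter_upwards [ae_restrict_mem measurableSet_Icc] with s hs
    rw [Real.norm_of_nonneg (hgnn s)]
    have h1 : exp (2 * δ * c * s) ≤ exp (2 * δ * c * b) :=
      exp_le_exp.mpr (mul_le_mul_of_nonneg_left hs.2 (by positivity))
    have h2 : (0:ℝ) ≤ h s ^ 2 * exp s := by positivity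
    calc h s ^ 2 * exp (2 * δ * c * s) * exp s
        ≤ h s ^ 2 * exp (2 * δ * c * b) * exp s := by nlinarith [exp_pos s, sq_nonneg (h s)]
      _ = exp (2 * δ * c * b) * (h s ^ 2 * exp s) := by ring
  -- key uniform bound
  have hpos : 0 < mu * (1 - δ ^ 2) :=
    mul_pos hmu0 (by nlinarith)
  have key : ∀ T : ℝ, R0 + 1 ≤ T →
      mu * (1 - δ ^ 2) * ∫ s in Set.Ioc (R0 + 1) T, g s ≤ CR0 + I := by
    intro T hT
    set k := T * ((1 + δ) * c) with hk
    obtain ⟨R, hR2, hRT, hRk, hR4c⟩ :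
        ∃ R : ℝ, 2 ≤ R ∧ T < R ∧ k / c ≤ R ∧ 4 * c ≤ R := by
      refine ⟨max (max (T + 1) (k / c)) (max 2 (4 * c)),
        le_trans (le_max_left _ _) (le_max_right _ _),
        lt_of_lt_of_le (by linarith) (le_trans (le_max_left _ _) (le_max_left _ _)),
        le_trans (le_max_right _ _) (le_max_left _ _),
        le_trans (le_max_right _ _) (le_max_right _ _)⟩
    have hRpos : 0 < R := by linarith
    have hka : k / ((1 + δ) * c) = T := by
      rw [hk, mul_div_assoc, div_self ha0.ne', mul_one]
    have hEn := hEnergy δ ⟨hδ0, hδ1⟩ k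
      (by rw [hk, mul_assoc]; exact mul_le_mul_of_nonneg_right hT ha0.le)
      R (by rw [hka]; exact hRT)
    rw [hka] at hEn
    -- bound the boundary term
    have hkcR : k ≤ c * R := by
      rw [← div_le_iff₀' hc0] at *
      exact hRk
    have hBle : (∫ s in Set.Ioc R (2 * R), h s ^ 2 * exp (2 * (k - c * s)) * exp s) ≤ I := by
      have hsub : Set.Ioc R (2 * R) ⊆ Set.Ici R0 := fun s hs => le_of_lt
        (lt_of_le_of_lt (by linarith : R0 ≤ R) hs.1)
      have hint2 : IntegrableOn p (Set.Ioc R (2 * R)) := hL2.mono_set hsub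
      have hmono : ∀ s ∈ Set.Ioc R (2 * R),
          h s ^ 2 * exp (2 * (k - c * s)) * exp s ≤ p s := by
        intro s hs
        have : exp (2 * (k - c * s)) ≤ 1 := by
          rw [exp_le_one_iff]
          have : c * R ≤ c * s := mul_le_mul_of_nonneg_left hs.1.le hc0.le
          nlinarith
        have h2 : (0:ℝ) ≤ h s ^ 2 * exp s := by positivity
        calc h s ^ 2 * exp (2 * (k - c * s)) * exp s
            = (h s ^ 2 * exp s) * exp (2 * (k - c * s)) := by ring
          _ ≤ (h s ^ 2 * exp s) * 1 := mul_le_mul_of_nonneg_left this h2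
          _ = p s := by rw [mul_one]
      have hint1 : IntegrableOn (fun s => h s ^ 2 * exp (2 * (k - c * s)) * exp s)
          (Set.Ioc R (2 * R)) := by
        apply Integrable.mono' hint2
        · apply AEStronglyMeasurable.mul _ Real.measurable_exp.aestronglyMeasurable
          apply AEStronglyMeasurable.mul (hmeas.pow_const 2).aestronglyMeasurable
          exact (Real.measurable_exp.comp (by fun_prop)).aestronglyMeasurable
        · filter_upwards [ae_restrict_mem measurableSet_Ioc] with s hs
          rw [Real.norm_of_nonneg (by positivity)]
          exact hmono s hs
      calc (∫ s in Set.Ioc R (2 * R), h s ^ 2 * exp (2 * (k - c * s)) * exp s)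
          ≤ ∫ s in Set.Ioc R (2 * R), p s :=
            setIntegral_mono_on hint1 hint2 measurableSet_Ioc hmono
        _ ≤ I := setIntegral_mono_set hL2
            (Filter.Eventually.of_forall fun s => hpnn s) hsub.eventuallyLE
    have hBnn : 0 ≤ ∫ s in Set.Ioc R (2 * R), h s ^ 2 * exp (2 * (k - c * s)) * exp s :=
      setIntegral_nonneg measurableSet_Ioc (fun s _ => by positivity)
    have hcoef : 1 / R ^ 2 + 2 * c / R ≤ 1 := by
      have h1 : 1 / R ^ 2 ≤ 1 / 2 := by
        rw [div_le_div_iff₀ (by positivity) (by norm_num)]; nlinarith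
      have h2 : 2 * c / R ≤ 1 / 2 := by
        rw [div_le_div_iff₀ hRpos (by norm_num)]; nlinarith
      linarith
    have hRHS : CR0 + (1 / R ^ 2 + 2 * c / R)
        * (∫ s in Set.Ioc R (2 * R), h s ^ 2 * exp (2 * (k - c * s)) * exp s)
        ≤ CR0 + I := by
      have hcoefnn : 0 ≤ 1 / R ^ 2 + 2 * c / R := by positivity
      have h3 : (1 / R ^ 2 + 2 * c / R)
          * (∫ s in Set.Ioc R (2 * R), h s ^ 2 * exp (2 * (k - c * s)) * exp s)
          ≤ (∫ s in Set.Ioc R (2 * R), h s ^ 2 * exp (2 * (k - c * s)) * exp s) := by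
        calc _ ≤ 1 * (∫ s in Set.Ioc R (2 * R), h s ^ 2 * exp (2 * (k - c * s)) * exp s) :=
              mul_le_mul_of_nonneg_right hcoef hBnn
          _ = _ := one_mul _
      linarith
    -- lower bound: restrict to [R0+1, T] where the cutoff is 1
    have hFint : IntegrableOn
        (fun s => mu * (1 - δ ^ 2) * (agmonCutoff R0 R s) ^ 2 * (h s) ^ 2
          * exp (2 * δ * c * s) * exp s) (Set.Ioc R0 T) := by
      apply Integrable.mono'
        (((hgint T).mono_set Set.Ioc_subset_Icc_self).const_mul (mu * (1 - δ ^ 2)))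
      · apply AEStronglyMeasurable.mul _ Real.measurable_exp.aestronglyMeasurable
        apply AEStronglyMeasurable.mul _
          ((Real.measurable_exp.comp (by fun_prop)).aestronglyMeasurable)
        apply AEStronglyMeasurable.mul _ (hmeas.pow_const 2).aestronglyMeasurable
        exact (measurable_const.mul ((agmonCutoff_measurable R0 R).pow_const 2)).aestronglyMeasurable
      · filter_upwards [ae_restrict_mem measurableSet_Ioc] with s hs
        have hphi0 : 0 ≤ agmonCutoff R0 R s := agmonCutoff_nonneg hRpos s
        have hphi1 : agmonCutoff R0 R s ≤ 1 := agmonCutoff_le_one hRpos s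
        have hphisq : (agmonCutoff R0 R s) ^ 2 ≤ 1 := pow_le_one₀ hphi0 hphi1
        rw [Real.norm_of_nonneg (by positivity)]
        have hgs := hgnn s
        calc mu * (1 - δ ^ 2) * (agmonCutoff R0 R s) ^ 2 * (h s) ^ 2
              * exp (2 * δ * c * s) * exp s
            = (mu * (1 - δ ^ 2)) * ((agmonCutoff R0 R s) ^ 2) * g s := by
              rw [hg]; ring
          _ ≤ (mu * (1 - δ ^ 2)) * 1 * g s :=
              mul_le_mul_of_nonneg_right (mul_le_mul_of_nonneg_left hphisq hpos.le) (hgnn s)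
          _ = (mu * (1 - δ ^ 2)) * g s := by rw [mul_one]
    have hLHS : mu * (1 - δ ^ 2) * ∫ s in Set.Ioc (R0 + 1) T, g s
        ≤ ∫ s in Set.Ioc R0 T,
            mu * (1 - δ ^ 2) * (agmonCutoff R0 R s) ^ 2 * (h s) ^ 2
              * exp (2 * δ * c * s) * exp s := by
      rw [← integral_const_mul]
      have heq : ∀ s ∈ Set.Ioc (R0 + 1) T,
          mu * (1 - δ ^ 2) * g s
          = mu * (1 - δ ^ 2) * (agmonCutoff R0 R s) ^ 2 * (h s) ^ 2
              * exp (2 * δ * c * s) * exp s := by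
        intro s hs
        rw [agmonCutoff_eq_one hs.1 (hs.2.trans hRT.le), hg]
        ring
      rw [setIntegral_congr_fun measurableSet_Ioc heq]
      apply setIntegral_mono_set hFint
      · filter_upwards [ae_restrict_mem measurableSet_Ioc] with s _
        have hphi0 : 0 ≤ agmonCutoff R0 R s := agmonCutoff_nonneg hRpos s
        positivity
      · exact (Set.Ioc_subset_Ioc_left (by linarith)).eventuallyLE
    exact hLHS.trans (hEn.trans hRHS)
  -- pass to the Lebesgue integral and take the sup
  set M := ENNReal.ofReal ((CR0 + I) / (mu * (1 - δ ^ 2))) with hM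
  have hlin : ∀ T : ℝ, R0 + 1 ≤ T →
      (∫⁻ s in Set.Ioc (R0 + 1) T, ENNReal.ofReal (g s)) ≤ M := by
    intro T hT
    have hint : IntegrableOn g (Set.Ioc (R0 + 1) T) :=
      (hgint T).mono_set fun s hs => ⟨by linarith [hs.1], hs.2⟩
    rw [← ofReal_integral_eq_lintegral_ofReal hint
      (Filter.Eventually.of_forall fun s => hgnn s)]
    apply ENNReal.ofReal_le_ofReal
    rw [le_div_iff₀ hpos]
    calc (∫ s in Set.Ioc (R0 + 1) T, g s) * (mu * (1 - δ ^ 2))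
        = mu * (1 - δ ^ 2) * ∫ s in Set.Ioc (R0 + 1) T, g s := by ring
      _ ≤ CR0 + I := key T hT
  have hIoi : (∫⁻ s in Set.Ioi (R0 + 1), ENNReal.ofReal (g s)) ≤ M := by
    set G : ℝ → ENNReal := fun s => ENNReal.ofReal (g s) with hG
    have hGmeas : Measurable G := hgmeas.ennreal_ofReal
    have hmono : Monotone (fun n : ℕ => (Set.Ioc (R0 + 1) (R0 + 1 + n)).indicator G) := by
      intro m n hmn
      have hsub : Set.Ioc (R0 + 1) (R0 + 1 + (m:ℝ)) ⊆ Set.Ioc (R0 + 1) (R0 + 1 + (n:ℝ)) := by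
        apply Set.Ioc_subset_Ioc_right
        have : (m:ℝ) ≤ n := Nat.cast_le.mpr hmn
        linarith
      exact Set.indicator_le_indicator_of_subset hsub (fun a => by simp)
    have hsup : ∀ x, (⨆ n : ℕ, (Set.Ioc (R0 + 1) (R0 + 1 + n)).indicator G x)
        = (Set.Ioi (R0 + 1)).indicator G x := by
      intro x
      by_cases hx : R0 + 1 < x
      · obtain ⟨n, hn⟩ := exists_nat_ge (x - (R0 + 1))
        have hxmem : x ∈ Set.Ioc (R0 + 1) (R0 + 1 + n) := ⟨hx, by linarith⟩
        rw [Set.indicator_of_mem (Set.mem_Ioi.mpr hx)]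
        apply le_antisymm
        · apply iSup_le
          intro m
          by_cases hm : x ∈ Set.Ioc (R0 + 1) (R0 + 1 + m)
          · rw [Set.indicator_of_mem hm]
          · rw [Set.indicator_of_notMem hm]; simp
        · calc G x = (Set.Ioc (R0 + 1) (R0 + 1 + n)).indicator G x :=
              (Set.indicator_of_mem hxmem G).symm
            _ ≤ _ := le_iSup (fun m : ℕ => (Set.Ioc (R0 + 1) (R0 + 1 + (m : ℝ))).indicator G x) n
      · rw [Set.indicator_of_notMem (fun hmem => hx (Set.mem_Ioi.mp hmem))]
        simp only [ENNReal.iSup_eq_zero]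
        intro n
        rw [Set.indicator_of_notMem (fun hmem => hx hmem.1)]
    rw [← lintegral_indicator measurableSet_Ioi]
    have : (fun x => (Set.Ioi (R0 + 1)).indicator G x)
        = fun x => ⨆ n : ℕ, (Set.Ioc (R0 + 1) (R0 + 1 + n)).indicator G x := by
      funext x; rw [hsup x]
    rw [this, lintegral_iSup (fun n => hGmeas.indicator measurableSet_Ioc) hmono]
    apply iSup_le
    intro n
    rw [lintegral_indicator measurableSet_Ioc]
    exact hlin (R0 + 1 + n) (by linarith [Nat.cast_nonneg (α := ℝ) n])
  -- assemble
  have hIoiInt : IntegrableOn g (Set.Ioi (R0 + 1)) := by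
    refine ⟨hgmeas.aestronglyMeasurable, ?_⟩
    rw [hasFiniteIntegral_iff_ofReal (Filter.Eventually.of_forall fun s => hgnn s)]
    exact lt_of_le_of_lt hIoi ENNReal.ofReal_lt_top
  have : IntegrableOn g (Set.Icc R0 (R0 + 1) ∪ Set.Ioi (R0 + 1)) :=
    (hgint (R0 + 1)).union hIoiInt
  rwa [Set.Icc_union_Ioi_eq_Ici (by linarith)] at this
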